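/- Let θ > 0, let (θ_i)_{i≥1} be a non-negative real sequence with θ_* := sup_i θ_i < ∞, and for m ∈ ℕ set δ(m,θ) := sup_{j≥0} | (1/m)·∑_{i=1}^m θ_{jm+i} − θ |. If 0 < 2m ≤ l ≤ n, then exp( |∑_{i=l+1}^n (θ_i − θ)/i| ) ≤ exp(2m(1+θ_*)/l)·(n/l)^{δ(m,θ)} ≤ e^{1+θ_*}·(n/l)^{δ(m,θ)}. -/

import Mathlib

open Finset


private lemma harm_le_log (l n : ℕ) (hl : 0 < l) (hln : l ≤ n) :
    ∑ i ∈ Ioc l n, (1 / (i : ℝ)) ≤ Real.log n - Real.log l := by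
  induction n, hln using Nat.le_induction with
  | base => simp
  | succ n hn ih =>
    rw [Finset.sum_Ioc_succ_top hn]
    have hn0 : 0 < n := lt_of_lt_of_le hl hn
    have hn0' : (0:ℝ) < n := by exact_mod_cast hn0
    have hx : (0:ℝ) < (n:ℝ)/((n:ℝ)+1) := by positivity
    have h2 := Real.log_le_sub_one_of_pos hx
    rw [Real.log_div (by positivity) (by positivity)] at h2
    have h3 : (n:ℝ)/((n:ℝ)+1) - 1 = -(1/((n:ℝ)+1)) := by field_simp; ring
    push_cast
    linarith [h2, h3.le, ih]

private lemma abel_aux (g : ℕ → ℝ) (l n : ℕ) (hln : l ≤ n) :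
    ∑ i ∈ Ioc l n, g i / (i:ℝ) =
      ∑ i ∈ Ioc l n, (∑ j ∈ Ioc l i, g j) * (1/(i:ℝ) - 1/((i:ℝ)+1))
        + (∑ j ∈ Ioc l n, g j) / ((n:ℝ)+1) := by
  induction n, hln using Nat.le_induction with
  | base => simp
  | succ n hn ih =>
    rw [Finset.sum_Ioc_succ_top hn, Finset.sum_Ioc_succ_top hn (fun i => (∑ j ∈ Ioc l i, g j) * (1/(i:ℝ) - 1/((i:ℝ)+1))), Finset.sum_Ioc_succ_top hn g]
    have h1 : ((n:ℝ)+1) ≠ 0 := by positivity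
    have h2 : ((n:ℝ)+1+1) ≠ 0 := by positivity
    have key : (∑ j ∈ Ioc l n, g j + g (n+1)) * (1/((n:ℝ)+1) - 1/((n:ℝ)+1+1))
        + (∑ j ∈ Ioc l n, g j + g (n+1)) / ((n:ℝ)+1+1)
        - (∑ j ∈ Ioc l n, g j) / ((n:ℝ)+1) = g (n+1) / ((n:ℝ)+1) := by
      field_simp
      ring
    push_cast
    push_cast at ih key
    linarith [ih, key]

private lemma teleA (l n : ℕ) (hln : l ≤ n) :
    ∑ i ∈ Ioc l n, ((i:ℝ) - l) * (1/(i:ℝ) - 1/((i:ℝ)+1)) + ((n:ℝ) - l) / ((n:ℝ)+1)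
      = ∑ i ∈ Ioc l n, 1/(i:ℝ) := by
  induction n, hln using Nat.le_induction with
  | base => simp
  | succ n hn ih =>
    rw [Finset.sum_Ioc_succ_top hn, Finset.sum_Ioc_succ_top hn (fun i => (1:ℝ)/(i:ℝ))]
    have hn0 : (0:ℝ) < (n:ℝ)+1 := by positivity
    have h1 : ((n:ℝ)+1) ≠ 0 := ne_of_gt hn0
    have h2 : ((n:ℝ)+1+1) ≠ 0 := by positivity
    have key : ((n:ℝ)+1-l) * (1/((n:ℝ)+1) - 1/((n:ℝ)+1+1)) + ((n:ℝ)+1-l)/((n:ℝ)+1+1)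
        - ((n:ℝ)-l)/((n:ℝ)+1) = 1/((n:ℝ)+1) := by
      field_simp
      try ring
      try tauto
    push_cast
    push_cast at ih key
    linarith [ih, key]

private lemma teleB (l n : ℕ) (hln : l ≤ n) :
    ∑ i ∈ Ioc l n, (1/(i:ℝ) - 1/((i:ℝ)+1)) + 1/((n:ℝ)+1) = 1/((l:ℝ)+1) := by
  induction n, hln using Nat.le_induction with
  | base => simp
  | succ n hn ih =>
    rw [Finset.sum_Ioc_succ_top hn]
    have h1 : ((n:ℝ)+1) ≠ 0 := by positivity
    have h2 : ((n:ℝ)+1+1) ≠ 0 := by positivity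
    have key : (1/((n:ℝ)+1) - 1/((n:ℝ)+1+1)) + 1/((n:ℝ)+1+1) - 1/((n:ℝ)+1) = 0 := by ring
    push_cast
    push_cast at ih key
    linarith [ih, key]


private lemma Tbound (θ t d : ℝ) (θi : ℕ → ℝ) (l n m : ℕ)
    (hθ0 : 0 ≤ θ) (ht0 : 0 ≤ t) (hd0 : 0 ≤ d) (hθtd : θ ≤ t + d)
    (ht1 : ∀ i, 1 ≤ i → θi i ≤ t) (hnn : ∀ i, 0 ≤ θi i)
    (hblockd : ∀ j : ℕ, |(∑ i ∈ Icc 1 m, θi (j*m+i)) - m*θ| ≤ m*d)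
    (hm : 0 < m) (hml : 2*m ≤ l) (hln : l ≤ n) :
    |∑ i ∈ Ioc l n, (θi i - θ)/(i:ℝ)| ≤
      d*(Real.log n - Real.log l) + 2*m*(1+t)/l := by
  have hl0 : 0 < l := lt_of_lt_of_le (by omega) hml
  -- per-term bound
  have hterm : ∀ i : ℕ, 1 ≤ i → |θi i - θ| ≤ t + d := by
    intro i hi
    rw [abs_le]
    constructor
    · have := hnn i; linarith
    · have := ht1 i hi; linarith
  -- block sums over Ioc (j*m) (j*m+m)
  have hblock : ∀ j : ℕ, |∑ i ∈ Ioc (j*m) (j*m+m), (θi i - θ)| ≤ m*d := by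
    intro j
    have hre : ∑ i ∈ Ioc (j*m) (j*m+m), θi i = ∑ i ∈ Icc 1 m, θi (j*m+i) := by
      rw [show Icc 1 m = Ioc 0 m from Finset.Icc_add_one_left_eq_Ioc 0 m]
      have h0 : Ioc (j*m) (j*m+m) = (Ioc 0 m).map (addLeftEmbedding (j*m)) := by
        rw [Finset.map_add_left_Ioc, Nat.add_zero]
      rw [h0, Finset.sum_map]
      rfl
    rw [Finset.sum_sub_distrib, Finset.sum_const, Nat.card_Ioc, hre]
    have : (j*m+m) - (j*m) = m := by omega
    rw [this]
    have : (m : ℕ) • θ = (m:ℝ) * θ := by simp [nsmul_eq_mul]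
    rw [this]
    exact hblockd j
  -- middle: consecutive blocks
  have hmid : ∀ q r : ℕ, q ≤ r → |∑ i ∈ Ioc (q*m) (r*m), (θi i - θ)| ≤ ((r:ℝ) - q)*(m*d) := by
    intro q r hqr
    induction r, hqr using Nat.le_induction with
    | base => simp
    | succ r hr ih =>
      have h1 : q*m ≤ r*m := Nat.mul_le_mul_right m hr
      have h2 : r*m ≤ r*m + m := Nat.le_add_right _ _
      have hsp : ∑ i ∈ Ioc (q*m) (r*m), (θi i - θ) + ∑ i ∈ Ioc (r*m) (r*m+m), (θi i - θ)
          = ∑ i ∈ Ioc (q*m) ((r+1)*m), (θi i - θ) := by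
        rw [show (r+1)*m = r*m + m by ring]
        exact Finset.sum_Ioc_consecutive _ h1 h2
      rw [← hsp]
      calc |∑ i ∈ Ioc (q*m) (r*m), (θi i - θ) + ∑ i ∈ Ioc (r*m) (r*m+m), (θi i - θ)|
          ≤ |∑ i ∈ Ioc (q*m) (r*m), (θi i - θ)| + |∑ i ∈ Ioc (r*m) (r*m+m), (θi i - θ)| :=
            abs_add_le _ _
        _ ≤ ((r:ℝ) - q)*(m*d) + m*d := add_le_add ih (hblock r)
        _ = (((r:ℝ)+1) - q)*(m*d) := by ring
        _ = ((((r+1):ℕ):ℝ) - q)*(m*d) := by push_cast; ring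
  -- end-piece bound
  have hend : ∀ u v : ℕ, l ≤ u → u ≤ v → |∑ i ∈ Ioc u v, (θi i - θ)| ≤ ((v:ℝ) - u) * (t + d) := by
    intro u v hu huv
    calc |∑ i ∈ Ioc u v, (θi i - θ)| ≤ ∑ i ∈ Ioc u v, |θi i - θ| := Finset.abs_sum_le_sum_abs _ _
      _ ≤ #(Ioc u v) • (t + d) := Finset.sum_le_card_nsmul _ _ _ (by
          intro i hi
          rw [Finset.mem_Ioc] at hi
          exact hterm i (by omega))
      _ = ((v - u : ℕ) : ℝ) * (t + d) := by rw [Nat.card_Ioc]; simp [nsmul_eq_mul]; ring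
      _ = ((v:ℝ) - u) * (t + d) := by rw [Nat.cast_sub huv]
  -- key partial sum bound
  have key : ∀ k : ℕ, l ≤ k → |∑ i ∈ Ioc l k, (θi i - θ)| ≤ d * ((k:ℝ) - l) + 2*m*t := by
    intro k hk
    set q := l/m + 1 with hq
    have hlq : l < q*m := by
      rw [hq]
      exact (Nat.div_lt_iff_lt_mul hm).1 (Nat.lt_succ_self (l/m))
    have hqlm : q*m ≤ l + m := by
      rw [hq, show (l/m+1)*m = l/m*m + m by ring]
      exact Nat.add_le_add_right (Nat.div_mul_le_self l m) m
    set a := min k (q*m) with ha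
    set b := max a ((k/m)*m) with hb
    have hla : l ≤ a := le_min hk (le_of_lt hlq)
    have hab : a ≤ b := le_max_left _ _
    have hbk : b ≤ k := max_le (min_le_left _ _) (Nat.div_mul_le_self k m)
    have hsp : ∑ i ∈ Ioc l a, (θi i - θ) + ∑ i ∈ Ioc a b, (θi i - θ) + ∑ i ∈ Ioc b k, (θi i - θ)
        = ∑ i ∈ Ioc l k, (θi i - θ) := by
      rw [Finset.sum_Ioc_consecutive _ hla hab, Finset.sum_Ioc_consecutive _ (le_trans hla hab) hbk]
    have hal : (a:ℝ) - l ≤ m := by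
      have : a ≤ l + m := le_trans (min_le_right _ _) hqlm
      have : (a:ℝ) ≤ (l:ℝ) + m := by exact_mod_cast this
      linarith
    have hleft := hend l a le_rfl hla
    have hmidb : |∑ i ∈ Ioc a b, (θi i - θ)| ≤ ((b:ℝ) - a) * d := by
      rcases lt_or_ge k (q*m) with hcase | hcase
      · have hak : a = k := min_eq_left (le_of_lt hcase)
        have hbb : b = a := by
          rw [hb]
          exact max_eq_left (by rw [hak]; exact Nat.div_mul_le_self k m)
        rw [hbb]
        simp
      · have hak : a = q*m := min_eq_right hcase
        have hqk : q ≤ k/m := (Nat.le_div_iff_mul_le hm).2 hcase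
        have hbb : b = (k/m)*m := by
          rw [hb, hak]
          exact max_eq_right (Nat.mul_le_mul_right m hqk)
        rw [hak, hbb]
        calc |∑ i ∈ Ioc (q*m) ((k/m)*m), (θi i - θ)| ≤ (((k/m:ℕ):ℝ) - q)*(m*d) :=
              hmid q (k/m) hqk
          _ = (((k/m)*m : ℕ):ℝ) * d - ((q*m : ℕ):ℝ) * d := by push_cast; ring
          _ = ((((k/m)*m : ℕ):ℝ) - ((q*m : ℕ):ℝ)) * d := by ring
    have hright : |∑ i ∈ Ioc b k, (θi i - θ)| ≤ ((k:ℝ) - b) * (t + d) :=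
      hend b k (le_trans hla hab) hbk
    have hkb : (k:ℝ) - b ≤ m := by
      rcases lt_or_ge k (q*m) with hcase | hcase
      · have hak : a = k := min_eq_left (le_of_lt hcase)
        have : b = k := le_antisymm hbk (by rw [hb, hak]; exact le_max_left _ _)
        rw [this]
        have hm0 : (0:ℝ) ≤ m := by positivity
        linarith
      · have hqk : q ≤ k/m := (Nat.le_div_iff_mul_le hm).2 hcase
        have hbb : b = (k/m)*m := by
          rw [hb, ha, min_eq_right hcase]
          exact max_eq_right (Nat.mul_le_mul_right m hqk)
        have h5 : k/m*m + k%m = k := Nat.div_add_mod' k m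
        have h6 : k%m < m := Nat.mod_lt k hm
        have h3 : k < b + m := by
          rw [hbb]
          conv_lhs => rw [← h5]
          exact Nat.add_lt_add_left h6 _
        have : (k:ℝ) < (b:ℝ) + m := by exact_mod_cast h3
        linarith
    have hcast1 : (a:ℝ) - l ≥ 0 := by
      have : (l:ℝ) ≤ a := by exact_mod_cast hla
      linarith
    have hcast2 : (b:ℝ) - a ≥ 0 := by
      have : (a:ℝ) ≤ b := by exact_mod_cast hab
      linarith
    have hcast3 : (k:ℝ) - b ≥ 0 := by
      have : (b:ℝ) ≤ k := by exact_mod_cast hbk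
      linarith
    rw [← hsp]
    calc |∑ i ∈ Ioc l a, (θi i - θ) + ∑ i ∈ Ioc a b, (θi i - θ) + ∑ i ∈ Ioc b k, (θi i - θ)|
        ≤ |∑ i ∈ Ioc l a, (θi i - θ)| + |∑ i ∈ Ioc a b, (θi i - θ)| + |∑ i ∈ Ioc b k, (θi i - θ)| := by
          exact (abs_add_le _ _).trans (add_le_add_left (abs_add_le _ _) _)
      _ ≤ ((a:ℝ) - l) * (t + d) + ((b:ℝ) - a) * d + ((k:ℝ) - b) * (t + d) :=
          add_le_add (add_le_add hleft hmidb) hright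
      _ ≤ d * ((k:ℝ) - l) + 2*m*t := by nlinarith [hal, hkb, hcast1, hcast2, hcast3, ht0, hd0]
  -- Abel summation
  have habel := abel_aux (fun i => θi i - θ) l n hln
  have hΔ : ∀ i ∈ Ioc l n, (0:ℝ) ≤ 1/(i:ℝ) - 1/((i:ℝ)+1) := by
    intro i hi
    rw [Finset.mem_Ioc] at hi
    have hi0 : (0:ℝ) < i := by
      have : 0 < i := by omega
      exact_mod_cast this
    have := one_div_le_one_div_of_le hi0 (by linarith : (i:ℝ) ≤ (i:ℝ)+1)
    linarith
  have hn1 : (0:ℝ) < (n:ℝ)+1 := by positivity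
  have hnl : (0:ℝ) ≤ (n:ℝ) - l := by
    have : (l:ℝ) ≤ n := by exact_mod_cast hln
    linarith
  have hmain : |∑ i ∈ Ioc l n, (θi i - θ)/(i:ℝ)| ≤
      ∑ i ∈ Ioc l n, (d*((i:ℝ)-l)+2*m*t) * (1/(i:ℝ)-1/((i:ℝ)+1))
        + (d*((n:ℝ)-l)+2*m*t)/((n:ℝ)+1) := by
    rw [habel]
    refine (abs_add_le _ _).trans (add_le_add ?_ ?_)
    · refine (Finset.abs_sum_le_sum_abs _ _).trans (Finset.sum_le_sum ?_)
      intro i hi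
      rw [abs_mul, abs_of_nonneg (hΔ i hi)]
      refine mul_le_mul_of_nonneg_right ?_ (hΔ i hi)
      exact key i (le_of_lt (Finset.mem_Ioc.1 hi).1)
    · rw [abs_div, abs_of_nonneg (le_of_lt hn1)]
      gcongr
      exact key n hln
  have hsplit : ∑ i ∈ Ioc l n, (d*((i:ℝ)-l)+2*m*t) * (1/(i:ℝ)-1/((i:ℝ)+1))
      = d * (∑ i ∈ Ioc l n, ((i:ℝ)-l)*(1/(i:ℝ)-1/((i:ℝ)+1)))
        + 2*m*t * (∑ i ∈ Ioc l n, (1/(i:ℝ)-1/((i:ℝ)+1))) := by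
    rw [Finset.mul_sum, Finset.mul_sum, ← Finset.sum_add_distrib]
    exact Finset.sum_congr rfl (fun i _ => by ring)
  have hA := teleA l n hln
  have hB := teleB l n hln
  have hH := harm_le_log l n hl0 hln
  have hl0' : (0:ℝ) < l := by exact_mod_cast hl0
  have hm0 : (0:ℝ) ≤ m := by positivity
  have hval : ∑ i ∈ Ioc l n, (d*((i:ℝ)-l)+2*m*t) * (1/(i:ℝ)-1/((i:ℝ)+1))
      + (d*((n:ℝ)-l)+2*m*t)/((n:ℝ)+1)
      = d * (∑ i ∈ Ioc l n, 1/(i:ℝ)) + 2*m*t/((l:ℝ)+1) := by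
    rw [hsplit]
    have e1 : (d*((n:ℝ)-l)+2*m*t)/((n:ℝ)+1)
        = d * (((n:ℝ)-l)/((n:ℝ)+1)) + 2*m*t * (1/((n:ℝ)+1)) := by
      field_simp
      try ring
    rw [e1]
    have : 2*m*t/((l:ℝ)+1) = 2*m*t * (1/((l:ℝ)+1)) := by ring
    rw [this, ← hA, ← hB]
    ring
  have hdH : d * (∑ i ∈ Ioc l n, 1/(i:ℝ)) ≤ d * (Real.log n - Real.log l) :=
    mul_le_mul_of_nonneg_left hH hd0
  have hlast : 2*m*t/((l:ℝ)+1) ≤ 2*m*(1+t)/l := by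
    rw [div_le_div_iff₀ (by positivity) hl0']
    nlinarith [hm0, hl0', ht0]
  calc |∑ i ∈ Ioc l n, (θi i - θ)/(i:ℝ)|
      ≤ d * (∑ i ∈ Ioc l n, 1/(i:ℝ)) + 2*m*t/((l:ℝ)+1) := by rw [← hval]; exact hmain
    _ ≤ d*(Real.log n - Real.log l) + 2*m*(1+t)/l := add_le_add hdH hlast

/-- Lemma 5.3: if `0 < 2m ≤ l ≤ n`, then
`exp|∑_{i=l+1}^n (θᵢ−θ)/i| ≤ exp(2m(1+θ_*)/l)(n/l)^{δ(m,θ)} ≤ e^{1+θ_*}(n/l)^{δ(m,θ)}`. -/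
theorem stmt7 (θ : ℝ) (hθ : 0 < θ) (θi : ℕ → ℝ) (hnn : ∀ i, 0 ≤ θi i)
    (hbdd : BddAbove (Set.range fun i => θi (i + 1)))
    (l n m : ℕ) (hm : 0 < m) (hml : 2 * m ≤ l) (hln : l ≤ n) :
    Real.exp |∑ i ∈ Icc (l + 1) n, (θi i - θ) / i| ≤
        Real.exp (2 * m * (1 + ⨆ i, θi (i + 1)) / l) *
          ((n : ℝ) / l) ^ (⨆ j : ℕ, |(1 / (m : ℝ)) * ∑ i ∈ Icc 1 m, θi (j * m + i) - θ|) ∧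
      Real.exp (2 * m * (1 + ⨆ i, θi (i + 1)) / l) *
          ((n : ℝ) / l) ^ (⨆ j : ℕ, |(1 / (m : ℝ)) * ∑ i ∈ Icc 1 m, θi (j * m + i) - θ|) ≤
        Real.exp (1 + ⨆ i, θi (i + 1)) *
          ((n : ℝ) / l) ^ (⨆ j : ℕ, |(1 / (m : ℝ)) * ∑ i ∈ Icc 1 m, θi (j * m + i) - θ|) := by
  set t := ⨆ i, θi (i + 1) with htdef
  set d := ⨆ j : ℕ, |(1 / (m : ℝ)) * ∑ i ∈ Icc 1 m, θi (j * m + i) - θ| with hddef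
  have hl0 : 0 < l := by omega
  have hn0 : 0 < n := lt_of_lt_of_le hl0 hln
  have hl0' : (0:ℝ) < l := by exact_mod_cast hl0
  have hn0' : (0:ℝ) < n := by exact_mod_cast hn0
  have hm' : (0:ℝ) < m := by exact_mod_cast hm
  -- basic facts about t
  have ht1 : ∀ i, 1 ≤ i → θi i ≤ t := by
    intro i hi
    have := le_ciSup hbdd (i - 1)
    rwa [Nat.sub_add_cancel hi] at this
  have ht0 : 0 ≤ t := le_trans (hnn 1) (ht1 1 le_rfl)
  -- averages lie in [0, t]
  have havg_nonneg : ∀ j : ℕ, 0 ≤ (1 / (m : ℝ)) * ∑ i ∈ Icc 1 m, θi (j * m + i) := by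
    intro j
    have : 0 ≤ ∑ i ∈ Icc 1 m, θi (j * m + i) :=
      Finset.sum_nonneg (fun i _ => hnn _)
    positivity
  have havg_le : ∀ j : ℕ, (1 / (m : ℝ)) * ∑ i ∈ Icc 1 m, θi (j * m + i) ≤ t := by
    intro j
    have hsle : ∑ i ∈ Icc 1 m, θi (j * m + i) ≤ (m:ℝ) * t := by
      have := Finset.sum_le_card_nsmul (Icc 1 m) (fun i => θi (j * m + i)) t (by
        intro i hi
        rw [Finset.mem_Icc] at hi
        exact ht1 _ (by omega))
      rw [Nat.card_Icc] at this
      simpa [nsmul_eq_mul] using this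
    rw [one_div, inv_mul_le_iff₀ hm']
    linarith [hsle]
  -- d facts
  have hbdd2 : BddAbove (Set.range fun j : ℕ => |(1 / (m : ℝ)) * ∑ i ∈ Icc 1 m, θi (j * m + i) - θ|) := by
    refine ⟨t + θ, ?_⟩
    rintro x ⟨j, rfl⟩
    rw [abs_le]
    constructor
    · have := havg_nonneg j; linarith
    · have := havg_le j; linarith
  have hd : ∀ j : ℕ, |(1 / (m : ℝ)) * ∑ i ∈ Icc 1 m, θi (j * m + i) - θ| ≤ d :=
    fun j => le_ciSup hbdd2 j
  have hd0 : 0 ≤ d := le_trans (abs_nonneg _) (hd 0)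
  have hθtd : θ ≤ t + d := by
    have h1 := hd 0
    have h2 := havg_le 0
    have h3 := abs_le.1 h1
    linarith [h3.1]
  -- block bound
  have hblockd : ∀ j : ℕ, |(∑ i ∈ Icc 1 m, θi (j*m+i)) - (m:ℝ)*θ| ≤ (m:ℝ)*d := by
    intro j
    have heq : (∑ i ∈ Icc 1 m, θi (j*m+i)) - (m:ℝ)*θ
        = (m:ℝ) * ((1 / (m : ℝ)) * ∑ i ∈ Icc 1 m, θi (j * m + i) - θ) := by
      field_simp
    rw [heq, abs_mul, abs_of_pos hm']
    exact mul_le_mul_of_nonneg_left (hd j) (le_of_lt hm')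
  have hT := Tbound θ t d θi l n m (le_of_lt hθ) ht0 hd0 hθtd ht1 hnn hblockd hm hml hln
  -- rewrite the sum in the goal
  have hIcc : Icc (l+1) n = Ioc l n := Finset.Icc_add_one_left_eq_Ioc l n
  rw [hIcc]
  have hpos : (0:ℝ) < (n:ℝ)/l := by positivity
  have hrpow : ((n:ℝ)/l) ^ d = Real.exp (d * (Real.log n - Real.log l)) := by
    rw [Real.rpow_def_of_pos hpos, Real.log_div (ne_of_gt hn0') (ne_of_gt hl0'), mul_comm]
  have hfirst : Real.exp |∑ i ∈ Ioc l n, (θi i - θ) / (i:ℝ)| ≤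
      Real.exp (2 * m * (1 + t) / l) * ((n:ℝ)/l) ^ d := by
    rw [hrpow, ← Real.exp_add]
    apply Real.exp_le_exp.2
    linarith [hT]
  refine ⟨hfirst, ?_⟩
  apply mul_le_mul_of_nonneg_right _ (Real.rpow_nonneg (le_of_lt hpos) d)
  apply Real.exp_le_exp.2
  rw [div_le_iff₀ hl0']
  have hml' : 2*(m:ℝ) ≤ l := by exact_mod_cast hml
  nlinarith [ht0, hml', hl0']
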